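/- arXiv:1302.4870 — 3 statements merged into one kernel-verified Lean document; each statement's English description precedes it below -/
import Mathlib

section
/- For each i ≥ 0, the recursive quadrangle 1-planar graph G_i admits a bar 1-visibility drawing; i.e., every recursive quadrangle 1-planar graph is bar 1-visible. -/
/-- A bar 1-visibility drawing of a graph: each vertex `v` is a horizontal bar
at height `y v` spanning `[left v, right v]`; each edge `{u,v}` is a vertical
segment at abscissa `ex u v` joining the bars of `u` and `v`; the vertical
segment of an edge intersects at most one bar other than those of its
endpoints. -/
structure BarDrawing {V : Type*} (G : SimpleGraph V) where
  y : V → ℝ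
  left : V → ℝ
  right : V → ℝ
  y_inj : Function.Injective y
  left_le_right : ∀ v, left v ≤ right v
  ex : V → V → ℝ
  ex_symm : ∀ u v, ex u v = ex v u
  ex_mem : ∀ u v, G.Adj u v →
    ex u v ∈ Set.Icc (left u) (right u) ∩ Set.Icc (left v) (right v)

/-- The bar of `w` is crossed by the vertical segment of the edge `{u,v}`. -/
def BarDrawing.CrossesBar {V : Type*} {G : SimpleGraph V} (d : BarDrawing G)
    (u v w : V) : Prop :=
  w ≠ u ∧ w ≠ v ∧ d.ex u v ∈ Set.Icc (d.left w) (d.right w) ∧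
    d.y w ∈ Set.Ioo (min (d.y u) (d.y v)) (max (d.y u) (d.y v))

/-- A graph is bar 1-visible if it admits a bar 1-visibility drawing: each
edge's vertical segment crosses at most one non-endpoint bar. -/
def IsBar1Visible {V : Type*} (G : SimpleGraph V) : Prop :=
  ∃ d : BarDrawing G, ∀ u v, G.Adj u v →
    {w : V | d.CrossesBar u v w}.Subsingleton

/-- The recursive quadrangle 1-planar graph `G_i`: its vertices form `i + 2`
nested rectangles of four vertices each (`(k, 0), (k, 1), (k, 2), (k, 3)` is
the `k`-th rectangle, the outermost being `k = i + 1`); each rectangle is a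
4-cycle, and each rectangle is joined to the next one by 16 edges (all pairs).
`G_{i+1}` is obtained from `G_i` by adding a new outer rectangle and these
16 connecting edges. -/
def recQuad (i : ℕ) : SimpleGraph (Fin (i + 2) × Fin 4) where
  Adj u v := u ≠ v ∧
    ((u.1.val = v.1.val ∧
        ((u.2.val + 1) % 4 = v.2.val ∨ (v.2.val + 1) % 4 = u.2.val)) ∨
      u.1.val + 1 = v.1.val ∨ v.1.val + 1 = u.1.val)
  symm := by
    constructor
    intro u v h
    obtain ⟨h1, h2⟩ := h
    exact ⟨h1.symm, by omega⟩
  loopless := by constructor; intro u h; exact h.1 rfl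

namespace RecQuadAux

/-- Height of vertex `(k,j)` (an integer). -/
def yZ (k j : ℕ) : ℤ :=
  if j = 0 then -(2*(k:ℤ)+2) else if j = 1 then -(2*(k:ℤ)+1)
  else if j = 2 then 2*(k:ℤ)+2 else 2*(k:ℤ)+1

/-- Left end of the bar of `(k,j)`. -/
def lZ (k j : ℕ) : ℤ :=
  -(10*(k:ℤ) + (if j = 0 then 1 else if j = 1 then 2 else if j = 2 then 4 else 3))

/-- Right end of the bar of `(k,j)`. -/
def rZ (k j : ℕ) : ℤ :=
  10*(k:ℤ) + (if j = 0 then 4 else if j = 1 then 3 else if j = 2 then 1 else 2)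

/-- Column of the edge joining `(k,a)` (inner) and `(k+1,b)` (outer). -/
def cZ (k a b : ℕ) : ℤ :=
  if a = 0 then (if b = 2 then 10*(k:ℤ)+4 else if b = 3 then 10*(k:ℤ)+3 else -(10*(k:ℤ)+1))
  else if a = 1 then (if b = 2 then 10*(k:ℤ)+3 else if b = 3 then 10*(k:ℤ)+2 else -(10*(k:ℤ)+2))
  else if a = 2 then -(10*(k:ℤ)+4)
  else (if b = 2 then 10*(k:ℤ)+2 else -(10*(k:ℤ)+3))

/-- Column of the intra-rectangle edge joining `(k,a)` and `(k,b)` (symmetric). -/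
def dZ (k a b : ℕ) : ℤ :=
  if (a = 0 ∧ b = 1) ∨ (a = 1 ∧ b = 0) then -(10*(k:ℤ)+1)
  else if (a = 1 ∧ b = 2) ∨ (a = 2 ∧ b = 1) then -(10*(k:ℤ)+2)
  else if (a = 2 ∧ b = 3) ∨ (a = 3 ∧ b = 2) then -(10*(k:ℤ)+3)
  else if (a = 0 ∧ b = 3) ∨ (a = 3 ∧ b = 0) then -(10*(k:ℤ)+1) else 0

/-- Column of the edge joining `(ku,ju)` and `(kv,jv)` (symmetrized). -/
def exZ (ku ju kv jv : ℕ) : ℤ :=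
  if ku < kv then cZ ku ju jv else if kv < ku then cZ kv jv ju
  else dZ ku ju jv

/-- The unique bar possibly crossed by the edge `(k,a)`–`(k',b)`, `k < k'`. -/
def cInter (k a k' b : ℕ) : ℕ × ℕ :=
  if b = 2 then (k', 3)
  else if b = 3 then
    (if a = 0 then (k, 1) else if a = 1 then (k, 3) else if a = 3 then (k, 2) else (k', 1))
  else (k', 1)

/-- The unique bar possibly crossed by the intra edge `(k,a)`–`(k,b)`. -/
def dInter (k a b : ℕ) : ℕ × ℕ :=
  if (a = 1 ∧ b = 2) ∨ (a = 2 ∧ b = 1) then (k, 3)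
  else if (a = 0 ∧ b = 3) ∨ (a = 3 ∧ b = 0) then (k, 1) else (k, 0)

/-- The unique bar possibly crossed by the edge `(ku,ju)`–`(kv,jv)`. -/
def candval (ku ju kv jv : ℕ) : ℕ × ℕ :=
  if ku < kv then cInter ku ju kv jv else if kv < ku then cInter kv jv ku ju
  else dInter ku ju jv

lemma yZ_inj (ku ju kv jv : ℕ) (hju : ju < 4) (hjv : jv < 4)
    (h : yZ ku ju = yZ kv jv) : ku = kv ∧ ju = jv := by
  simp only [yZ] at h
  split_ifs at h <;> omega

lemma lZ_le_rZ (k j : ℕ) : lZ k j ≤ rZ k j := by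
  simp only [lZ, rZ]; split_ifs <;> omega

lemma exZ_eq_lt {ku kv : ℕ} (ju jv : ℕ) (h : ku < kv) :
    exZ ku ju kv jv = cZ ku ju jv := by
  simp only [exZ, if_pos h]

lemma exZ_eq_gt {ku kv : ℕ} (ju jv : ℕ) (h : kv < ku) :
    exZ ku ju kv jv = cZ kv jv ju := by
  simp only [exZ, if_neg (by omega : ¬ ku < kv), if_pos h]

lemma exZ_eq_eq (ku ju jv : ℕ) : exZ ku ju ku jv = dZ ku ju jv := by
  simp only [exZ, if_neg (lt_irrefl ku)]

lemma candval_eq_lt {ku kv : ℕ} (ju jv : ℕ) (h : ku < kv) :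
    candval ku ju kv jv = cInter ku ju kv jv := by
  simp only [candval, if_pos h]

lemma candval_eq_gt {ku kv : ℕ} (ju jv : ℕ) (h : kv < ku) :
    candval ku ju kv jv = cInter kv jv ku ju := by
  simp only [candval, if_neg (by omega : ¬ ku < kv), if_pos h]

lemma candval_eq_eq (ku ju jv : ℕ) : candval ku ju ku jv = dInter ku ju jv := by
  simp only [candval, if_neg (lt_irrefl ku)]

set_option maxHeartbeats 40000000 in
lemma exZ_symm (ku ju kv jv : ℕ) : exZ ku ju kv jv = exZ kv jv ku ju := by
  rcases lt_trichotomy ku kv with h | h | h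
  · rw [exZ_eq_lt _ _ h, exZ_eq_gt _ _ h]
  · subst h
    rw [exZ_eq_eq, exZ_eq_eq]
    simp only [dZ]
    split_ifs <;> omega
  · rw [exZ_eq_gt _ _ h, exZ_eq_lt _ _ h]

set_option maxHeartbeats 40000000 in
lemma memZ (ku ju kv jv : ℕ) (hju : ju < 4) (hjv : jv < 4)
    (hne : ¬(ku = kv ∧ ju = jv))
    (hadj : (ku = kv ∧ ((ju + 1) % 4 = jv ∨ (jv + 1) % 4 = ju)) ∨
      ku + 1 = kv ∨ kv + 1 = ku) :
    lZ ku ju ≤ exZ ku ju kv jv ∧ exZ ku ju kv jv ≤ rZ ku ju ∧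
      lZ kv jv ≤ exZ ku ju kv jv ∧ exZ ku ju kv jv ≤ rZ kv jv := by
  rcases lt_trichotomy ku kv with h | h | h
  · rw [exZ_eq_lt _ _ h]
    simp only [lZ, rZ, cZ]
    split_ifs <;> omega
  · subst h
    rw [exZ_eq_eq]
    simp only [lZ, rZ, dZ]
    split_ifs <;> omega
  · rw [exZ_eq_gt _ _ h]
    simp only [lZ, rZ, cZ]
    split_ifs <;> omega

set_option maxHeartbeats 40000000 in
lemma keyZ (ku ju kv jv kw jw : ℕ) (hju : ju < 4) (hjv : jv < 4) (hjw : jw < 4)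
    (hadj : (ku = kv ∧ ((ju + 1) % 4 = jv ∨ (jv + 1) % 4 = ju)) ∨
      ku + 1 = kv ∨ kv + 1 = ku)
    (hne : ¬(ku = kv ∧ ju = jv))
    (hwu : ¬(kw = ku ∧ jw = ju)) (hwv : ¬(kw = kv ∧ jw = jv))
    (hl : lZ kw jw ≤ exZ ku ju kv jv) (hr : exZ ku ju kv jv ≤ rZ kw jw)
    (hy1 : yZ ku ju < yZ kw jw ∨ yZ kv jv < yZ kw jw)
    (hy2 : yZ kw jw < yZ ku ju ∨ yZ kw jw < yZ kv jv) :
    (kw, jw) = candval ku ju kv jv := by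
  rcases lt_trichotomy ku kv with h | h | h
  · rw [exZ_eq_lt _ _ h] at hl hr
    rw [candval_eq_lt _ _ h]
    simp only [lZ, rZ, cZ, yZ, cInter] at *
    split_ifs at * <;> simp only [Prod.mk.injEq] <;> omega
  · subst h
    rw [exZ_eq_eq] at hl hr
    rw [candval_eq_eq]
    simp only [lZ, rZ, dZ, yZ, dInter] at *
    split_ifs at * <;> simp only [Prod.mk.injEq] <;> omega
  · rw [exZ_eq_gt _ _ h] at hl hr
    rw [candval_eq_gt _ _ h]
    simp only [lZ, rZ, cZ, yZ, cInter] at *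
    split_ifs at * <;> simp only [Prod.mk.injEq] <;> omega

/-- The explicit bar 1-visibility drawing of `recQuad i`. -/
def drawing (i : ℕ) : BarDrawing (recQuad i) where
  y v := ((yZ v.1.val v.2.val : ℤ) : ℝ)
  left v := ((lZ v.1.val v.2.val : ℤ) : ℝ)
  right v := ((rZ v.1.val v.2.val : ℤ) : ℝ)
  y_inj := by
    intro u v h
    dsimp only at h
    have h' : yZ u.1.val u.2.val = yZ v.1.val v.2.val := by exact_mod_cast h
    have h2 := yZ_inj _ _ _ _ u.2.isLt v.2.isLt h'
    rcases u with ⟨ku, ju⟩; rcases v with ⟨kv, jv⟩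
    simp only [Prod.mk.injEq, Fin.ext_iff]
    exact h2
  left_le_right v := by exact_mod_cast lZ_le_rZ v.1.val v.2.val
  ex u v := ((exZ u.1.val u.2.val v.1.val v.2.val : ℤ) : ℝ)
  ex_symm u v := by exact_mod_cast exZ_symm u.1.val u.2.val v.1.val v.2.val
  ex_mem := by
    intro u v huv
    obtain ⟨hne, hadj⟩ := huv
    simp only [ne_eq, Prod.ext_iff, Fin.ext_iff, not_and] at hne
    have hne' : ¬(u.1.val = v.1.val ∧ u.2.val = v.2.val) := by
      intro h; exact hne h.1 h.2
    obtain ⟨h1, h2, h3, h4⟩ := memZ u.1.val u.2.val v.1.val v.2.val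
      u.2.isLt v.2.isLt hne' hadj
    simp only [Set.mem_inter_iff, Set.mem_Icc]
    refine ⟨⟨?_, ?_⟩, ?_, ?_⟩ <;> exact_mod_cast ‹_›

theorem crossing_det (i : ℕ) (u v w : Fin (i + 2) × Fin 4)
    (huv : (recQuad i).Adj u v) (h : (drawing i).CrossesBar u v w) :
    (w.1.val, w.2.val) = candval u.1.val u.2.val v.1.val v.2.val := by
  obtain ⟨hne, hadj⟩ := huv
  obtain ⟨hwu, hwv, hx, hy⟩ := h
  rw [Set.mem_Icc] at hx
  rw [Set.mem_Ioo] at hy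
  simp only [drawing] at hx hy
  have hl : lZ w.1.val w.2.val ≤ exZ u.1.val u.2.val v.1.val v.2.val := by
    exact_mod_cast hx.1
  have hr : exZ u.1.val u.2.val v.1.val v.2.val ≤ rZ w.1.val w.2.val := by
    exact_mod_cast hx.2
  have hy1 : yZ u.1.val u.2.val < yZ w.1.val w.2.val ∨
      yZ v.1.val v.2.val < yZ w.1.val w.2.val := by
    have h1 := hy.1
    rw [min_lt_iff] at h1
    exact_mod_cast h1
  have hy2 : yZ w.1.val w.2.val < yZ u.1.val u.2.val ∨
      yZ w.1.val w.2.val < yZ v.1.val v.2.val := by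
    have h2 := hy.2
    rw [lt_max_iff] at h2
    exact_mod_cast h2
  simp only [ne_eq, Prod.ext_iff, Fin.ext_iff, not_and] at hne hwu hwv
  exact keyZ u.1.val u.2.val v.1.val v.2.val w.1.val w.2.val
    u.2.isLt v.2.isLt w.2.isLt hadj
    (fun h => hne h.1 h.2) (fun h => hwu h.1 h.2) (fun h => hwv h.1 h.2)
    hl hr hy1 hy2

end RecQuadAux

/-- Every recursive quadrangle 1-planar graph `G_i` admits a bar
1-visibility drawing, i.e. it is bar 1-visible. -/
theorem recQuad_isBar1Visible (i : ℕ) : IsBar1Visible (recQuad i) := by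
  refine ⟨RecQuadAux.drawing i, ?_⟩
  intro u v huv w1 hw1 w2 hw2
  have h1 := RecQuadAux.crossing_det i u v w1 huv hw1
  have h2 := RecQuadAux.crossing_det i u v w2 huv hw2
  have h3 : (w1.1.val, w1.2.val) = (w2.1.val, w2.2.val) := h1.trans h2.symm
  simp only [Prod.mk.injEq] at h3
  rcases w1 with ⟨k1, j1⟩; rcases w2 with ⟨k2, j2⟩
  simp only [Prod.mk.injEq, Fin.ext_iff]
  exact h3
end

section
/- Every even pseudo double wheel 1-planar graph is a bar 1-visible graph. -/
/-- The even pseudo double wheel 1-planar graph on `2n + 2` vertices: a cycle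
`c_0 c_1 … c_{2n-1}` (with `v_i` the even- and `u_i` the odd-indexed
vertices), a hub `x = Sum.inr false` outside and a hub `y = Sum.inr true`
inside, where in the plane graph `H` (cycle plus `x` joined to the `u_i` and
`y` joined to the `v_i`) a pair of crossing edges is added inside every face.
This results in: both hubs joined to all cycle vertices, all cycle edges
`c_k c_{k+1}`, and all "skip" edges `c_k c_{k+2}`. -/
def evenPDW (n : ℕ) : SimpleGraph (Fin (2 * n) ⊕ Bool) where
  Adj u v :=
    match u, v with
    | Sum.inl a, Sum.inl b =>
        a.val ≠ b.val ∧
        ((a.val + 1) % (2 * n) = b.val ∨ (b.val + 1) % (2 * n) = a.val ∨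
          (a.val + 2) % (2 * n) = b.val ∨ (b.val + 2) % (2 * n) = a.val)
    | Sum.inl _, Sum.inr _ => True
    | Sum.inr _, Sum.inl _ => True
    | Sum.inr a, Sum.inr b => a ≠ b
  symm := by
    refine ⟨?_⟩
    intro u v h
    cases u <;> cases v <;> simp_all [ne_comm] <;> omega
  loopless := by
    refine ⟨?_⟩
    intro u h
    cases u <;> simp_all

def pdwY (n : ℕ) : Fin (2 * n) ⊕ Bool → ℤ
  | .inl a => 8 * a.val
  | .inr false => -8
  | .inr true => 8 * (2 * n)

def pdwL (n : ℕ) : Fin (2 * n) ⊕ Bool → ℤ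
  | .inl a =>
      if a.val = 1 then 2 - 8 * (2 * n)
      else if a.val = 2 * n - 1 then -(8 * (2 * n)) - 8
      else 8 * a.val - 8 * (2 * n)
  | .inr false => 0
  | .inr true => -(8 * (2 * n))

def pdwR (n : ℕ) : Fin (2 * n) ⊕ Bool → ℤ
  | .inl a => if a.val = 0 ∨ a.val = 2 * n - 2 then 8 * (2 * n) - 12 else 8 * a.val
  | .inr _ => 8 * (2 * n)

def pdwE (n : ℕ) : Fin (2 * n) ⊕ Bool → Fin (2 * n) ⊕ Bool → ℤ
  | .inl a, .inl b =>
      if min a.val b.val = 0 ∧ max a.val b.val = 2 * n - 1 then 1 - 8 * (2 * n)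
      else if min a.val b.val = 0 ∧ max a.val b.val = 2 * n - 2 then 8 * (2 * n) - 12
      else if min a.val b.val = 1 ∧ max a.val b.val = 2 * n - 1 then 2 - 8 * (2 * n)
      else 0
  | .inl a, .inr false => 8 * a.val
  | .inl a, .inr true => 8 * a.val - 8 * (2 * n)
  | .inr false, .inl a => 8 * a.val
  | .inr true, .inl a => 8 * a.val - 8 * (2 * n)
  | .inr _, .inr _ => 8 * (2 * n)

def pdwF (n : ℕ) : Fin (2 * n) ⊕ Bool → Fin (2 * n) ⊕ Bool → ℕ
  | .inl a, .inl b => min a.val b.val + 1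
  | .inl _, .inr false => 0
  | .inl _, .inr true => 2 * n - 1
  | .inr false, .inl _ => 0
  | .inr true, .inl _ => 2 * n - 1
  | .inr _, .inr _ => 0

lemma pdw_mod {N m r : ℕ} (hm : m < 2 * N) (h : m % N = r) :
    (m < N ∧ r = m) ∨ (N ≤ m ∧ m = N + r) := by
  rcases Nat.lt_or_ge m N with h' | h'
  · rw [Nat.mod_eq_of_lt h'] at h; exact Or.inl ⟨h', h.symm⟩
  · have h2 : m % N = m - N := by
      rw [Nat.mod_eq_sub_mod h', Nat.mod_eq_of_lt (by omega)]
    omega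

set_option maxHeartbeats 4000000 in
lemma pdw_cross (n : ℕ) (hn : 3 ≤ n) (u v w : Fin (2 * n) ⊕ Bool)
    (huv : (evenPDW n).Adj u v) (h1 : w ≠ u) (h2 : w ≠ v)
    (h3 : pdwL n w ≤ pdwE n u v) (h4 : pdwE n u v ≤ pdwR n w)
    (h5 : min (pdwY n u) (pdwY n v) < pdwY n w)
    (h6 : pdwY n w < max (pdwY n u) (pdwY n v)) :
    ∃ c : Fin (2 * n), w = Sum.inl c ∧ c.val = pdwF n u v := by
  rcases u with a | (_ | _) <;> rcases v with b | (_ | _)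
  · -- c–c edges
    have ha := a.isLt; have hb := b.isLt
    obtain ⟨hab, hor⟩ := huv
    have hD : b.val = a.val + 1 ∨ a.val = b.val + 1 ∨ b.val = a.val + 2 ∨ a.val = b.val + 2 ∨
        (a.val + 1 = 2 * n ∧ b.val = 0) ∨ (b.val + 1 = 2 * n ∧ a.val = 0) ∨
        (a.val + 2 = 2 * n ∧ b.val = 0) ∨ (b.val + 2 = 2 * n ∧ a.val = 0) ∨
        (a.val = 2 * n - 1 ∧ b.val = 1) ∨ (b.val = 2 * n - 1 ∧ a.val = 1) := by
      rcases hor with h | h | h | h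
      · rcases pdw_mod (by omega) h with h' | h' <;> omega
      · rcases pdw_mod (by omega) h with h' | h' <;> omega
      · rcases pdw_mod (by omega) h with h' | h' <;> omega
      · rcases pdw_mod (by omega) h with h' | h' <;> omega
    rcases w with c | (_ | _)
    · have hc := c.isLt
      refine ⟨c, rfl, ?_⟩
      have hca : c.val ≠ a.val := by simpa [Fin.ext_iff] using h1
      have hcb : c.val ≠ b.val := by simpa [Fin.ext_iff] using h2
      simp only [pdwL, pdwR, pdwE, pdwY, pdwF] at h3 h4 h5 h6 ⊢
      split_ifs at h3 h4 <;> omega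
    · exfalso; simp only [pdwY] at h5; omega
    · exfalso; simp only [pdwY] at h6; omega
  · -- u = c_a, v = x
    rcases w with c | (_ | _)
    · have ha := a.isLt; have hc := c.isLt
      refine ⟨c, rfl, ?_⟩
      have hca : c.val ≠ a.val := by simpa [Fin.ext_iff] using h1
      simp only [pdwL, pdwR, pdwE, pdwY, pdwF] at h3 h4 h5 h6 ⊢
      split_ifs at h3 h4 <;> omega
    · exact absurd rfl h2
    · exfalso; have ha := a.isLt; simp only [pdwY] at h6; omega
  · -- u = c_a, v = y
    rcases w with c | (_ | _)
    · have ha := a.isLt; have hc := c.isLt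
      refine ⟨c, rfl, ?_⟩
      have hca : c.val ≠ a.val := by simpa [Fin.ext_iff] using h1
      simp only [pdwL, pdwR, pdwE, pdwY, pdwF] at h3 h4 h5 h6 ⊢
      split_ifs at h3 h4 <;> omega
    · exfalso; simp only [pdwY] at h5; omega
    · exact absurd rfl h2
  · -- u = x, v = c_b
    rcases w with c | (_ | _)
    · have hb := b.isLt; have hc := c.isLt
      refine ⟨c, rfl, ?_⟩
      have hcb : c.val ≠ b.val := by simpa [Fin.ext_iff] using h2
      simp only [pdwL, pdwR, pdwE, pdwY, pdwF] at h3 h4 h5 h6 ⊢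
      split_ifs at h3 h4 <;> omega
    · exact absurd rfl h1
    · exfalso; have hb := b.isLt; simp only [pdwY] at h6; omega
  · exact absurd rfl huv
  · -- u = x, v = y
    rcases w with c | (_ | _)
    · exfalso; have hc := c.isLt
      simp only [pdwR, pdwE] at h4
      split_ifs at h4 <;> omega
    · exact absurd rfl h1
    · exact absurd rfl h2
  · -- u = y, v = c_b
    rcases w with c | (_ | _)
    · have hb := b.isLt; have hc := c.isLt
      refine ⟨c, rfl, ?_⟩
      have hcb : c.val ≠ b.val := by simpa [Fin.ext_iff] using h2
      simp only [pdwL, pdwR, pdwE, pdwY, pdwF] at h3 h4 h5 h6 ⊢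
      split_ifs at h3 h4 <;> omega
    · exfalso; simp only [pdwY] at h5; omega
    · exact absurd rfl h1
  · -- u = y, v = x
    rcases w with c | (_ | _)
    · exfalso; have hc := c.isLt
      simp only [pdwR, pdwE] at h4
      split_ifs at h4 <;> omega
    · exact absurd rfl h2
    · exact absurd rfl h1
  · exact absurd rfl huv

set_option maxHeartbeats 4000000 in
/-- Every even pseudo double wheel 1-planar graph is a bar
1-visible graph. -/
theorem evenPDW_isBar1Visible (n : ℕ) (hn : 3 ≤ n) :
    IsBar1Visible (evenPDW n) := by
  refine ⟨{
    y := fun v => ((pdwY n v : ℤ) : ℝ)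
    left := fun v => ((pdwL n v : ℤ) : ℝ)
    right := fun v => ((pdwR n v : ℤ) : ℝ)
    y_inj := by
      intro u v h
      have h' : pdwY n u = pdwY n v := by
        exact_mod_cast show ((pdwY n u : ℤ) : ℝ) = ((pdwY n v : ℤ) : ℝ) from h
      rcases u with a | (_ | _) <;> rcases v with b | (_ | _) <;>
        simp only [pdwY, Sum.inl.injEq, Sum.inr.injEq, Fin.ext_iff] at h' ⊢ <;>
        first
          | rfl
          | (have ha := a.isLt; have hb := b.isLt; omega)
          | (have ha := a.isLt; omega)
          | (have hb := b.isLt; omega)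
          | omega
    left_le_right := by
      intro v
      have h : pdwL n v ≤ pdwR n v := by
        rcases v with a | (_ | _)
        · have := a.isLt
          simp only [pdwL, pdwR]
          split_ifs <;> omega
        · simp only [pdwL, pdwR]; omega
        · simp only [pdwL, pdwR]; omega
      show ((pdwL n v : ℤ) : ℝ) ≤ ((pdwR n v : ℤ) : ℝ)
      exact_mod_cast h
    ex := fun u v => ((pdwE n u v : ℤ) : ℝ)
    ex_symm := by
      intro u v
      have h : pdwE n u v = pdwE n v u := by
        rcases u with a | (_ | _) <;> rcases v with b | (_ | _) <;>
          simp only [pdwE] <;>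
          first
            | rfl
            | rw [Nat.min_comm, Nat.max_comm]
      show ((pdwE n u v : ℤ) : ℝ) = ((pdwE n v u : ℤ) : ℝ)
      exact_mod_cast h
    ex_mem := by
      intro u v _
      have key : pdwL n u ≤ pdwE n u v ∧ pdwE n u v ≤ pdwR n u ∧
          pdwL n v ≤ pdwE n u v ∧ pdwE n u v ≤ pdwR n v := by
        rcases u with a | (_ | _) <;> rcases v with b | (_ | _) <;>
          simp only [pdwL, pdwR, pdwE] <;>
          first
            | (have ha := a.isLt; have hb := b.isLt; split_ifs <;> omega)
            | (have ha := a.isLt; split_ifs <;> omega)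
            | (have hb := b.isLt; split_ifs <;> omega)
            | (split_ifs <;> omega)
            | omega
      simp only [Set.mem_inter_iff, Set.mem_Icc]
      refine ⟨⟨?_, ?_⟩, ?_, ?_⟩
      · exact_mod_cast key.1
      · exact_mod_cast key.2.1
      · exact_mod_cast key.2.2.1
      · exact_mod_cast key.2.2.2 }, ?_⟩
  intro u v huv w1 hw1 w2 hw2
  simp only [Set.mem_setOf_eq, BarDrawing.CrossesBar, Set.mem_Icc, Set.mem_Ioo] at hw1 hw2
  obtain ⟨hne1, hne2, ⟨hl1, hr1⟩, ho1, ho1'⟩ := hw1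
  obtain ⟨hne1', hne2', ⟨hl2, hr2⟩, ho2, ho2'⟩ := hw2
  obtain ⟨c1, rfl, hf1⟩ := pdw_cross n hn u v w1 huv hne1 hne2
    (by exact_mod_cast hl1) (by exact_mod_cast hr1)
    (by exact_mod_cast ho1) (by exact_mod_cast ho1')
  obtain ⟨c2, rfl, hf2⟩ := pdw_cross n hn u v w2 huv hne1' hne2'
    (by exact_mod_cast hl2) (by exact_mod_cast hr2)
    (by exact_mod_cast ho2) (by exact_mod_cast ho2')
  exact congrArg Sum.inl (Fin.ext (hf1.trans hf2.symm))
end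

section
/- In the directed planar st-graph G_{st} built from the p×q grid with right diagonals, the longest directed path in the dual graph G*_{st} has length at most 2(p+q). -/
/-- The faces of the planar st-graph `G_st` built from the `p × q` grid with
right diagonals (source `s` below, sink `t` above). Cell `(i, j)` (rows
`i, i+1`, columns `j, j+1`, 0-based) is split by its right diagonal into a
left triangular face `L i j` and a right triangular face `R i j`; `B j` and
`T j` are the faces between consecutive `s`-edges resp. `t`-edges; `sstar` and
`tstar` are the left and right outer faces. -/
inductive GstFace (p q : ℕ) : Type
  | L (i j : ℕ) | R (i j : ℕ) | B (j : ℕ) | T (j : ℕ) | sstar | tstar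

/-- The edges of the dual digraph `G*_st`: for every edge `e` of `G_st` there
is a dual edge from the face to the left of `e` to the face to the right of
`e`. -/
def gstDualEdge (p q : ℕ) : GstFace p q → GstFace p q → Prop := fun f g =>
  -- dual of the right-diagonal edge of cell (i, j)
  (∃ i j, i + 1 < p ∧ j + 1 < q ∧ f = .L i j ∧ g = .R i j) ∨
  -- dual of a horizontal edge, interior rows
  (∃ i j, 1 ≤ i ∧ i + 1 < p ∧ j + 1 < q ∧ f = .R i j ∧ g = .L (i - 1) j) ∨
  -- dual of a horizontal edge of the first row
  (∃ j, 2 ≤ p ∧ j + 1 < q ∧ f = .R 0 j ∧ g = .B j) ∨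
  -- dual of a horizontal edge of the last row
  (∃ j, 2 ≤ p ∧ j + 1 < q ∧ f = .T j ∧ g = .L (p - 2) j) ∨
  -- dual of a horizontal edge when p = 1
  (∃ j, p = 1 ∧ j + 1 < q ∧ f = .T j ∧ g = .B j) ∨
  -- dual of a vertical edge in the first column
  (∃ i, i + 1 < p ∧ 2 ≤ q ∧ f = .sstar ∧ g = .L i 0) ∨
  -- dual of a vertical edge in the last column
  (∃ i, i + 1 < p ∧ 2 ≤ q ∧ f = .R i (q - 2) ∧ g = .tstar) ∨
  -- dual of an interior vertical edge
  (∃ i j, i + 1 < p ∧ 1 ≤ j ∧ j + 1 < q ∧ f = .R i (j - 1) ∧ g = .L i j) ∨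
  -- dual of a vertical, s- or t-edge when q = 1
  (q = 1 ∧ f = .sstar ∧ g = .tstar) ∨
  -- duals of the s-edges
  (2 ≤ q ∧ f = .sstar ∧ g = .B 0) ∨
  (∃ j, j + 2 < q ∧ f = .B j ∧ g = .B (j + 1)) ∨
  (2 ≤ q ∧ f = .B (q - 2) ∧ g = .tstar) ∨
  -- duals of the t-edges
  (2 ≤ q ∧ f = .sstar ∧ g = .T 0) ∨
  (∃ j, j + 2 < q ∧ f = .T j ∧ g = .T (j + 1)) ∨
  (2 ≤ q ∧ f = .T (q - 2) ∧ g = .tstar)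


def gstPhi (p q : ℕ) : GstFace p q → ℕ
  | .L i j => 2 * (p - 1 - i) + 2 * j
  | .R i j => 2 * (p - 1 - i) + 2 * j + 1
  | .B j => 2 * p + 2 * j + 1
  | .T j => 2 * j + 1
  | .sstar => 0
  | .tstar => 2 * (p + q)

lemma gstPhi_step {p q : ℕ} {f g : GstFace p q} (h : gstDualEdge p q f g) :
    gstPhi p q f < gstPhi p q g ∧ gstPhi p q g ≤ 2 * (p + q) := by
  rcases h with ⟨i, j, h1, h2, rfl, rfl⟩ | ⟨i, j, h1, h2, h3, rfl, rfl⟩ |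
    ⟨j, h1, h2, rfl, rfl⟩ | ⟨j, h1, h2, rfl, rfl⟩ | ⟨j, h1, h2, rfl, rfl⟩ |
    ⟨i, h1, h2, rfl, rfl⟩ | ⟨i, h1, h2, rfl, rfl⟩ | ⟨i, j, h1, h2, h3, rfl, rfl⟩ |
    ⟨h1, rfl, rfl⟩ | ⟨h1, rfl, rfl⟩ | ⟨j, h1, rfl, rfl⟩ | ⟨h1, rfl, rfl⟩ |
    ⟨h1, rfl, rfl⟩ | ⟨j, h1, rfl, rfl⟩ | ⟨h1, rfl, rfl⟩ <;>
  simp only [gstPhi] <;> omega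

/-- In the dual `G*_st` of the planar st-graph built from the
`p × q` grid with right diagonals, every directed path has length at most
`2(p + q)`. -/
theorem gstDual_longest_path_le (p q m : ℕ) (f : ℕ → GstFace p q)
    (hpath : ∀ k, k < m → gstDualEdge p q (f k) (f (k + 1))) :
    m ≤ 2 * (p + q) := by
  rcases Nat.eq_zero_or_pos m with rfl | hm
  · exact Nat.zero_le _
  · have key : ∀ k, k ≤ m → k ≤ gstPhi p q (f k) := by
      intro k hk
      induction k with
      | zero => exact Nat.zero_le _
      | succ n ih =>
        have h1 := gstPhi_step (hpath n (by omega))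
        have := ih (by omega)
        omega
    have h2 := key m le_rfl
    have h3 := gstPhi_step (hpath (m - 1) (by omega))
    have : m - 1 + 1 = m := by omega
    rw [this] at h3
    omega
end
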